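/- arXiv:1005.1884 — 3 statements merged into one kernel-verified Lean document; each statement's English description precedes it below -/
import Mathlib

section
/- For integers d ≥ 0 and 0 ≤ s ≤ d+1, define F(d,t,s) = Σ_{j=s}^{d+1} (-1)^j C(j,s) C(d+1,j) j^{d-t}. Then for every t with s ≤ t ≤ d, F(d,t,s) = 0. -/
open Finset Polynomial

lemma alt_sum_poly (n : ℕ) : ∀ p : Polynomial ℤ, p.degree < n →
    ∑ j ∈ Finset.range (n + 1), (-1 : ℤ) ^ j * (n.choose j : ℤ) * p.eval (j : ℤ) = 0 := by
  induction n with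
  | zero =>
    intro p hp
    have hp0 : p = 0 := Polynomial.degree_eq_bot.mp
      (Nat.WithBot.lt_zero_iff.mp (by exact_mod_cast hp))
    simp [hp0]
  | succ n ih =>
    intro p hp
    by_cases h0 : p = 0
    · simp [h0]
    set q : Polynomial ℤ := p - p.comp (X + C 1) with hq
    have hlc : p.leadingCoeff = (p.comp (X + C 1)).leadingCoeff := by
      rw [Polynomial.leadingCoeff_comp (by rw [Polynomial.natDegree_X_add_C]; omega),
        (Polynomial.monic_X_add_C (1:ℤ)).leadingCoeff, one_pow, mul_one]
    have hcne : p.comp (X + C 1) ≠ 0 := fun hc => by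
      apply h0
      have : p.leadingCoeff = 0 := by rw [hlc, hc]; simp
      exact Polynomial.leadingCoeff_eq_zero.mp this
    have hdc : p.degree = (p.comp (X + C 1)).degree := by
      rw [Polynomial.degree_eq_natDegree h0, Polynomial.degree_eq_natDegree hcne,
        Polynomial.natDegree_comp, Polynomial.natDegree_X_add_C, mul_one]
    have hqdeg : q.degree < p.degree := Polynomial.degree_sub_lt hdc h0 hlc
    have hqn : q.degree < (n : WithBot ℕ) := by
      have hn' : p.natDegree < n + 1 := (Polynomial.natDegree_lt_iff_degree_lt h0).mpr hp
      have hle : p.degree ≤ (n : WithBot ℕ) :=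
        le_trans Polynomial.degree_le_natDegree (by exact_mod_cast Nat.lt_succ_iff.mp hn')
      exact lt_of_lt_of_le hqdeg hle
    have IH := ih q hqn
    set f : ℕ → ℤ := fun j => (-1 : ℤ) ^ j * ((n+1).choose j : ℤ) * p.eval (j : ℤ) with hf
    set g : ℕ → ℤ := fun j => (-1 : ℤ) ^ j * (n.choose j : ℤ) * p.eval (j : ℤ) with hg
    set h : ℕ → ℤ := fun k => (-1 : ℤ) ^ k * (n.choose k : ℤ) * p.eval ((k : ℤ) + 1) with hh
    have hqe : ∀ k : ℕ, (-1 : ℤ) ^ k * (n.choose k : ℤ) * q.eval (k : ℤ) = g k - h k := by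
      intro k; simp only [hq, Polynomial.eval_sub, Polynomial.eval_comp, Polynomial.eval_add,
        Polynomial.eval_X, Polynomial.eval_C, hg, hh]
      ring
    have h4 : ∀ k : ℕ, f (k+1) = g (k+1) - h k := by
      intro k
      simp only [hf, hg, hh, Nat.choose_succ_succ]
      push_cast
      ring
    have h1 : ∑ j ∈ Finset.range (n+2), f j = (∑ k ∈ Finset.range (n+1), f (k+1)) + f 0 :=
      Finset.sum_range_succ' f (n+1)
    have h2 : ∑ j ∈ Finset.range (n+2), g j = (∑ k ∈ Finset.range (n+1), g (k+1)) + g 0 :=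
      Finset.sum_range_succ' g (n+1)
    have h3 : ∑ j ∈ Finset.range (n+2), g j = ∑ j ∈ Finset.range (n+1), g j := by
      rw [Finset.sum_range_succ]
      simp [hg]
    have h5 : ∑ k ∈ Finset.range (n+1), f (k+1)
        = (∑ k ∈ Finset.range (n+1), g (k+1)) - ∑ k ∈ Finset.range (n+1), h k := by
      rw [← Finset.sum_sub_distrib]
      exact Finset.sum_congr rfl fun k _ => h4 k
    have h6 : ∑ k ∈ Finset.range (n+1), (-1 : ℤ) ^ k * (n.choose k : ℤ) * q.eval (k : ℤ)
        = (∑ k ∈ Finset.range (n+1), g k) - ∑ k ∈ Finset.range (n+1), h k := by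
      rw [← Finset.sum_sub_distrib]
      exact Finset.sum_congr rfl fun k _ => hqe k
    have hf0 : f 0 = g 0 := by simp [hf, hg]
    have : ∑ j ∈ Finset.range (n+2), f j = 0 := by
      rw [h1, h5, hf0]
      have : (∑ k ∈ Finset.range (n+1), g (k+1)) = (∑ j ∈ Finset.range (n+1), g j) - g 0 := by
        rw [← h3, h2]; ring
      rw [this]
      rw [h6] at IH
      linarith
    simpa [hf] using this

/-- `F(d,t,s) = Σ_{j=s}^{d+1} (-1)^j C(j,s) C(d+1,j) j^{d-t}` vanishes for `s ≤ t ≤ d`. -/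
theorem F_vanishes (d t s : ℕ) (hs : s ≤ d + 1) (hst : s ≤ t) (htd : t ≤ d) :
    ∑ j ∈ Finset.Icc s (d + 1),
      (-1 : ℤ) ^ j * (j.choose s : ℤ) * ((d + 1).choose j : ℤ) * (j : ℤ) ^ (d - t) = 0 := by
  -- extend the sum to the full range
  have hext : ∑ j ∈ Finset.Icc s (d + 1),
        (-1 : ℤ) ^ j * (j.choose s : ℤ) * ((d + 1).choose j : ℤ) * (j : ℤ) ^ (d - t)
      = ∑ j ∈ Finset.range (d + 2),
        (-1 : ℤ) ^ j * (j.choose s : ℤ) * ((d + 1).choose j : ℤ) * (j : ℤ) ^ (d - t) := by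
    refine Finset.sum_subset ?_ ?_
    · intro x hx
      simp only [Finset.mem_Icc, Finset.mem_range] at *
      omega
    · intro x hx hx'
      simp only [Finset.mem_range, Finset.mem_Icc] at hx hx'
      have : x < s := by omega
      simp [Nat.choose_eq_zero_of_lt this]
  rw [hext]
  set p : Polynomial ℤ := descPochhammer ℤ s * X ^ (d - t) with hp
  have hpdeg : p.degree < ((d + 1 : ℕ) : WithBot ℕ) := by
    have h1 : p.natDegree = s + (d - t) := by
      rw [hp, Polynomial.natDegree_mul (by
          exact (monic_descPochhammer ℤ s).ne_zero) (by
          exact pow_ne_zero _ Polynomial.X_ne_zero)]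
      rw [descPochhammer_natDegree, Polynomial.natDegree_X_pow]
    have hpne : p ≠ 0 := mul_ne_zero (monic_descPochhammer ℤ s).ne_zero
      (pow_ne_zero _ Polynomial.X_ne_zero)
    rw [Polynomial.degree_eq_natDegree hpne, h1]
    exact_mod_cast (by omega : s + (d - t) < d + 1)
  have key := alt_sum_poly (d + 1) p hpdeg
  have heval : ∀ j : ℕ, p.eval (j : ℤ) = (j.descFactorial s : ℤ) * (j : ℤ) ^ (d - t) := by
    intro j
    simp [hp, descPochhammer_eval_eq_descFactorial]
  -- multiply original sum by s!
  have hfac : (s.factorial : ℤ) * ∑ j ∈ Finset.range (d + 2),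
        (-1 : ℤ) ^ j * (j.choose s : ℤ) * ((d + 1).choose j : ℤ) * (j : ℤ) ^ (d - t)
      = ∑ j ∈ Finset.range (d + 2), (-1 : ℤ) ^ j * ((d+1).choose j : ℤ) * p.eval (j : ℤ) := by
    rw [Finset.mul_sum]
    refine Finset.sum_congr rfl fun j _ => ?_
    rw [heval j]
    have : (j.descFactorial s : ℤ) = (s.factorial : ℤ) * (j.choose s : ℤ) := by
      exact_mod_cast congrArg Nat.cast (Nat.descFactorial_eq_factorial_mul_choose j s)
    rw [this]
    ring
  have := key
  rw [show d + 1 + 1 = d + 2 from rfl] at this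
  rw [this] at hfac
  have hfne : (s.factorial : ℤ) ≠ 0 := by exact_mod_cast s.factorial_ne_zero
  exact (mul_eq_zero.mp hfac).resolve_left hfne
end

section
/- For integers d ≥ 0 and 1 ≤ s ≤ d+1, define F(d,t,s) = Σ_{j=s}^{d+1} (-1)^j C(j,s) C(d+1,j) j^{d-t}. Then F(d, s-1, s) = (-1)^{d+1} (d+1-s)! · C(d+1, s). -/
open Finset fwdDiff

private lemma fwdDiff_pow_key :
    ∀ k : ℕ, (∀ x : ℤ, (fwdDiff (1:ℤ))^[k] (fun y : ℤ => y ^ k) x = (k.factorial : ℤ)) ∧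
      (∀ m : ℕ, k < m → ∀ x : ℤ, (fwdDiff (1:ℤ))^[m] (fun y : ℤ => y ^ k) x = 0) := by
  intro k
  induction k using Nat.strong_induction_on with
  | _ k IH =>
    have hΔ : fwdDiff (1:ℤ) (fun y : ℤ => y ^ k) =
        ∑ j ∈ Finset.range k, ((k.choose j : ℤ) • fun z : ℤ => z ^ j) := by
      funext y
      have := add_pow y (1 : ℤ) k
      simp only [one_pow, mul_one] at this
      rw [Finset.sum_range_succ, Nat.choose_self, Nat.cast_one, mul_one] at this
      simp only [fwdDiff, Finset.sum_apply, Pi.smul_apply, smul_eq_mul, this]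
      rw [add_sub_cancel_right]
      exact Finset.sum_congr rfl fun j _ => by ring
    constructor
    · intro x
      rcases k with _ | k'
      · simp [Nat.factorial]
      · rw [Function.iterate_succ_apply, hΔ, fwdDiff_iter_finset_sum]
        simp only [Finset.sum_apply]
        rw [Finset.sum_range_succ]
        have h0 : ∀ j ∈ Finset.range k',
            ((fwdDiff (1:ℤ))^[k'] ((((k' + 1).choose j : ℤ)) • fun z : ℤ => z ^ j)) x = 0 := by
          intro j hj
          rw [fwdDiff_iter_const_smul]
          simp only [Pi.smul_apply, smul_eq_mul]
          rw [(IH j (Finset.mem_range.mp hj |>.trans (Nat.lt_succ_self k'))).2 k'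
            (Finset.mem_range.mp hj) x, mul_zero]
        rw [Finset.sum_eq_zero h0, zero_add, fwdDiff_iter_const_smul]
        simp only [Pi.smul_apply, smul_eq_mul]
        rw [(IH k' (Nat.lt_succ_self k')).1 x, Nat.choose_succ_self_right]
        rw [Nat.factorial_succ]
        push_cast
        ring
    · intro m hm x
      rcases m with _ | m'
      · omega
      · rw [Function.iterate_succ_apply, hΔ, fwdDiff_iter_finset_sum]
        simp only [Finset.sum_apply]
        apply Finset.sum_eq_zero
        intro j hj
        rw [fwdDiff_iter_const_smul]
        simp only [Pi.smul_apply, smul_eq_mul]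
        have hjk : j < k := Finset.mem_range.mp hj
        rw [(IH j hjk).2 m' (by omega) x, mul_zero]

private lemma alt_sum_pow (m : ℕ) (x : ℤ) :
    ∑ i ∈ Finset.range (m + 1), (-1 : ℤ) ^ i * (m.choose i : ℤ) * (x + i) ^ m =
      (-1 : ℤ) ^ m * (m.factorial : ℤ) := by
  have h := fwdDiff_iter_eq_sum_shift (1 : ℤ) (fun y : ℤ => y ^ m) m x
  rw [(fwdDiff_pow_key m).1 x] at h
  have h2 : ((-1 : ℤ) ^ m) * (m.factorial : ℤ) =
      (-1 : ℤ) ^ m * ∑ k ∈ Finset.range (m + 1),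
        ((-1 : ℤ) ^ (m - k) * (m.choose k : ℤ)) • ((x + k • (1:ℤ)) ^ m) := by
    rw [← h]
  rw [h2, Finset.mul_sum]
  apply Finset.sum_congr rfl
  intro k hk
  have hkm : k ≤ m := Nat.lt_succ_iff.mp (Finset.mem_range.mp hk)
  have h1 : (-1 : ℤ) ^ m = (-1 : ℤ) ^ (m - k) * (-1 : ℤ) ^ k := by
    rw [← pow_add]; congr 1; omega
  have h2' : ((-1 : ℤ) ^ (m - k)) * ((-1 : ℤ) ^ (m - k)) = 1 := by
    rw [← pow_add]; exact Even.neg_one_pow ⟨m - k, rfl⟩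
  simp only [smul_eq_mul, nsmul_eq_mul, mul_one]
  rw [h1]
  linear_combination (-((-1 : ℤ) ^ k * (m.choose k : ℤ) * (x + (k : ℤ)) ^ m)) * h2'

/-- `F(d,s-1,s) = (-1)^{d+1} (d+1-s)! C(d+1,s)` for `1 ≤ s ≤ d+1`. -/
theorem F_at_t_eq_s_sub_one (d s : ℕ) (hs1 : 1 ≤ s) (hs : s ≤ d + 1) :
    ∑ j ∈ Finset.Icc s (d + 1),
      (-1 : ℤ) ^ j * (j.choose s : ℤ) * ((d + 1).choose j : ℤ) * (j : ℤ) ^ (d - (s - 1)) =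
      (-1 : ℤ) ^ (d + 1) * ((d + 1 - s).factorial : ℤ) * ((d + 1).choose s : ℤ) := by
  set m := d + 1 - s with hm
  have hexp : d - (s - 1) = m := by omega
  rw [hexp]
  rw [← Finset.Ico_add_one_right_eq_Icc, Finset.sum_Ico_eq_sum_range]
  have hrange : d + 1 + 1 - s = m + 1 := by omega
  rw [hrange]
  have hterm : ∀ i ∈ Finset.range (m + 1),
      (-1 : ℤ) ^ (s + i) * ((s + i).choose s : ℤ) * ((d + 1).choose (s + i) : ℤ) *
        ((s + i : ℕ) : ℤ) ^ m =
      ((d + 1).choose s : ℤ) * (-1 : ℤ) ^ s *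
        ((-1 : ℤ) ^ i * ((m.choose i : ℤ)) * (((s : ℤ) + i) ^ m)) := by
    intro i hi
    have him : i ≤ m := Nat.lt_succ_iff.mp (Finset.mem_range.mp hi)
    have hchoose : (d + 1).choose (s + i) * (s + i).choose s =
        (d + 1).choose s * m.choose i := by
      have := Nat.choose_mul (n := d + 1) (k := s + i) (s := s) (Nat.le_add_right s i)
      simpa [hm, Nat.add_sub_cancel_left] using this
    have hc : ((d + 1).choose (s + i) : ℤ) * ((s + i).choose s : ℤ) =
        ((d + 1).choose s : ℤ) * (m.choose i : ℤ) := by exact_mod_cast congrArg Nat.cast hchoose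
    push_cast
    rw [pow_add]
    linear_combination ((-1 : ℤ) ^ s * (-1 : ℤ) ^ i * ((s : ℤ) + (i : ℤ)) ^ m) * hc
  rw [Finset.sum_congr rfl hterm, ← Finset.mul_sum, alt_sum_pow m (s : ℤ)]
  have hsign : (-1 : ℤ) ^ s * (-1 : ℤ) ^ m = (-1 : ℤ) ^ (d + 1) := by
    rw [← pow_add]; congr 1; omega
  linear_combination (((d + 1).choose s : ℤ) * (m.factorial : ℤ)) * hsign
end

section
/- Let H be a function analytic at y = 0 with Taylor expansion H(y) = h_m y^m + h_{m+1} y^{m+1} + ..., i.e., vanishing to order at least m at 0. Define the operator L on such functions by (LG)(y) = G(y/(1+y)) - G(y). Then for every n ∈ ℕ, Lⁿ H is analytic at 0 and vanishes to order at least m+n at 0. -/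
open Filter Topology

/-- Relation between iterated derivatives and power series coefficients. -/
lemma iteratedDeriv_eq_coeff {f : ℂ → ℂ} {p : FormalMultilinearSeries ℂ ℂ ℂ}
    (hp : HasFPowerSeriesAt f p 0) (n : ℕ) :
    iteratedDeriv n f 0 = (n.factorial : ℂ) * p.coeff n := by
  obtain ⟨r, hball⟩ := hp
  have h := hball.factorial_smul (1 : ℂ) n
  rw [iteratedDeriv_eq_iteratedFDeriv]
  rw [← h, nsmul_eq_mul]
  rfl


/-- The derivative of an analytic function is analytic. -/
lemma AnalyticAt.deriv' {g : ℂ → ℂ} (hg : AnalyticAt ℂ g 0) : AnalyticAt ℂ (deriv g) 0 := by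
  obtain ⟨s, hs, h⟩ := hg.eventually_analyticAt.exists_mem
  exact AnalyticOnNhd.deriv (fun x hx => h x hx) 0 (mem_of_mem_nhds hs)

/-- Forward direction: vanishing iterated derivatives give a factorization. -/
lemma fact_of_van : ∀ (m : ℕ) (f : ℂ → ℂ), AnalyticAt ℂ f 0 →
    (∀ i < m, iteratedDeriv i f 0 = 0) →
    ∃ g : ℂ → ℂ, AnalyticAt ℂ g 0 ∧ f =ᶠ[𝓝 0] fun z => z ^ m * g z := by
  intro m
  induction m with
  | zero =>
    intro f hf _
    exact ⟨f, hf, by simp⟩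
  | succ m ih =>
    intro f hf hvan
    obtain ⟨p, hp⟩ := hf
    have hf0 : f 0 = 0 := by
      have := hvan 0 (Nat.succ_pos m)
      simpa [iteratedDeriv_zero] using this
    have hcoeff : ∀ i < m + 1, p.coeff i = 0 := by
      intro i hi
      have h1 := iteratedDeriv_eq_coeff hp i
      rw [hvan i hi] at h1
      exact (mul_eq_zero.mp h1.symm).resolve_left
        (Nat.cast_ne_zero.mpr i.factorial_ne_zero)
    -- dslope f 0 is analytic with shifted coefficients
    have hds : HasFPowerSeriesAt (dslope f 0) p.fslope 0 :=
      hp.has_fpower_series_dslope_fslope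
    have hdsvan : ∀ i < m, iteratedDeriv i (dslope f 0) 0 = 0 := by
      intro i hi
      rw [iteratedDeriv_eq_coeff hds i, FormalMultilinearSeries.coeff_fslope,
        hcoeff (i + 1) (by omega), mul_zero]
    obtain ⟨g, hg, heq⟩ := ih (dslope f 0) ⟨p.fslope, hds⟩ hdsvan
    refine ⟨g, hg, ?_⟩
    have hfz : ∀ z : ℂ, f z = z * dslope f 0 z := by
      intro z
      have := sub_smul_dslope f 0 z
      simp only [sub_zero, smul_eq_mul, hf0] at this
      exact this.symm
    filter_upwards [heq] with z hz
    rw [hfz z, hz]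
    ring

/-- Reverse direction: a factorization gives vanishing iterated derivatives. -/
lemma van_of_fact : ∀ (m : ℕ) (g f : ℂ → ℂ), AnalyticAt ℂ g 0 →
    (f =ᶠ[𝓝 0] fun z => z ^ m * g z) → ∀ i < m, iteratedDeriv i f 0 = 0 := by
  intro m
  induction m with
  | zero => intro g f _ _ i hi; omega
  | succ m ih =>
    intro g f hg heq i hi
    match i with
    | 0 =>
      have h0 := heq.eq_of_nhds
      simpa [iteratedDeriv_zero] using h0
    | j + 1 =>
      rw [iteratedDeriv_succ']
      have hg' : ∀ᶠ z in 𝓝 (0 : ℂ), AnalyticAt ℂ g z :=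
        hg.eventually_analyticAt
      have hderiv : deriv f =ᶠ[𝓝 0]
          fun z => z ^ m * ((m + 1 : ℂ) * g z + z * deriv g z) := by
        have h1 : deriv f =ᶠ[𝓝 0] deriv (fun z => z ^ (m + 1) * g z) := heq.deriv
        refine h1.trans ?_
        filter_upwards [hg'] with z hz
        have hdg : DifferentiableAt ℂ g z := hz.differentiableAt
        rw [deriv_fun_mul (by fun_prop) hdg]
        rw [deriv_pow_field]
        push_cast
        ring
      exact ih (fun z => (m + 1 : ℂ) * g z + z * deriv g z) (deriv f)
        (by exact (analyticAt_const.mul hg).add (analyticAt_id.mul (hg.deriv')))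
        hderiv j (by omega)

/-- The operator `L` acting on functions by `(L G)(y) = G (y/(1+y)) - G y`. -/
noncomputable def Lop (G : ℂ → ℂ) : ℂ → ℂ := fun y => G (y / (1 + y)) - G y

lemma phi_analytic : AnalyticAt ℂ (fun y : ℂ => y / (1 + y)) 0 :=
  analyticAt_id.div (analyticAt_const.add analyticAt_id) (by simp)

lemma phi_tendsto : Filter.Tendsto (fun y : ℂ => y / (1 + y)) (𝓝 0) (𝓝 0) := by
  have := phi_analytic.continuousAt.tendsto
  simpa using this

/-- Key step: `Lop` increases the order of the factorization by one. -/
lemma Lop_step (m : ℕ) (G : ℂ → ℂ) (hG : AnalyticAt ℂ G 0)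
    (hfac : ∃ g : ℂ → ℂ, AnalyticAt ℂ g 0 ∧ G =ᶠ[𝓝 0] fun z => z ^ m * g z) :
    AnalyticAt ℂ (Lop G) 0 ∧
      ∃ k : ℂ → ℂ, AnalyticAt ℂ k 0 ∧ Lop G =ᶠ[𝓝 0] fun z => z ^ (m + 1) * k z := by
  obtain ⟨g, hg, heq⟩ := hfac
  have hcomp0 : (0 : ℂ) / (1 + 0) = 0 := by simp
  have hGcomp : AnalyticAt ℂ (fun y => G (y / (1 + y))) 0 :=
    AnalyticAt.comp (by rw [hcomp0]; exact hG) phi_analytic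
  have hL : AnalyticAt ℂ (Lop G) 0 := hGcomp.sub hG
  refine ⟨hL, ?_⟩
  -- k y = g(y/(1+y)) * (1+y)⁻^m - g y
  set k : ℂ → ℂ := fun y => g (y / (1 + y)) / (1 + y) ^ m - g y with hk
  have hgcomp : AnalyticAt ℂ (fun y => g (y / (1 + y))) 0 :=
    AnalyticAt.comp (by rw [hcomp0]; exact hg) phi_analytic
  have hkan : AnalyticAt ℂ k 0 :=
    (hgcomp.div ((analyticAt_const.add analyticAt_id).pow m) (by simp)).sub hg
  have hk0 : k 0 = 0 := by simp [hk]
  -- Lop G =ᶠ z^m * k z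
  have heqcomp : (fun y => G (y / (1 + y))) =ᶠ[𝓝 0]
      fun y => (y / (1 + y)) ^ m * g (y / (1 + y)) :=
    phi_tendsto.eventually heq
  have hne : ∀ᶠ y in 𝓝 (0 : ℂ), (1 : ℂ) + y ≠ 0 := by
    have : ContinuousAt (fun y : ℂ => 1 + y) 0 := by fun_prop
    have h := this.eventually_ne (by simp : (1 : ℂ) + 0 ≠ 0)
    exact h
  have hmk : Lop G =ᶠ[𝓝 0] fun y => y ^ m * k y := by
    filter_upwards [heqcomp, heq, hne] with y h1 h2 h3
    simp only [Lop, h1, h2, hk, div_pow]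
    field_simp
  -- k vanishes at 0 so k = z * k1
  obtain ⟨k1, hk1an, hk1⟩ := fact_of_van 1 k hkan
    (by intro i hi; interval_cases i; simpa [iteratedDeriv_zero] using hk0)
  refine ⟨k1, hk1an, ?_⟩
  filter_upwards [hmk, hk1] with y h1 h2
  rw [h1, h2]
  ring

/-- If `H` is analytic at `0` and vanishes there to order at least `m`, then `Lⁿ H`
is analytic at `0` and vanishes there to order at least `m + n`. -/
theorem Lop_iterate_increases_vanishing_order (H : ℂ → ℂ) (m : ℕ)
    (hH : AnalyticAt ℂ H 0) (hvan : ∀ i < m, iteratedDeriv i H 0 = 0) :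
    ∀ n : ℕ, AnalyticAt ℂ (Lop^[n] H) 0 ∧
      ∀ i < m + n, iteratedDeriv i (Lop^[n] H) 0 = 0 := by
  have key : ∀ n : ℕ, AnalyticAt ℂ (Lop^[n] H) 0 ∧
      ∃ g : ℂ → ℂ, AnalyticAt ℂ g 0 ∧ Lop^[n] H =ᶠ[𝓝 0] fun z => z ^ (m + n) * g z := by
    intro n
    induction n with
    | zero =>
      refine ⟨hH, ?_⟩
      simpa using fact_of_van m H hH hvan
    | succ n ih =>
      obtain ⟨han, hfac⟩ := ih
      have := Lop_step (m + n) (Lop^[n] H) han hfac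
      rw [Function.iterate_succ_apply']
      exact this
  intro n
  obtain ⟨han, g, hg, heq⟩ := key n
  exact ⟨han, van_of_fact (m + n) g _ hg heq⟩
end
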